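/- Suppose AᵀA ≠ 0, λ₁ > λ_r, β > 0, 0 < α < 2/(λ₁ + β), and δ = 2/(λ₁/(λ₁+β) + λ_r/(λ_r+β)). Then for the IPG iterates there exist a positive finite integer τ and positive finite real numbers c and r with r < 1 such that ‖g(t+1)‖ ≤ c · (r · μ_GD)^{t+1} · ‖g(0)‖ for all t > τ. -/

import Mathlib

open Matrix Finset

/-- Euclidean norm of a vector in `ℝ^d`. -/
noncomputable def enormVec {d : ℕ} (v : Fin d → ℝ) : ℝ :=
  Real.sqrt (∑ i, v i ^ 2)


private lemma ipg_l2_triangle {d : ℕ} (u v : Fin d → ℝ) :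
    Real.sqrt (∑ i, (u i + v i)^2) ≤ Real.sqrt (∑ i, u i^2) + Real.sqrt (∑ i, v i^2) := by
  have h1 : (∑ i, (u i + v i)^2) ≤ (Real.sqrt (∑ i, u i^2) + Real.sqrt (∑ i, v i^2))^2 := by
    have hc := Real.sum_mul_le_sqrt_mul_sqrt univ u v
    have e1 : Real.sqrt (∑ i, u i^2) ^ 2 = ∑ i, u i^2 := Real.sq_sqrt (by positivity)
    have e2 : Real.sqrt (∑ i, v i^2) ^ 2 = ∑ i, v i^2 := Real.sq_sqrt (by positivity)
    have : (∑ i, (u i + v i)^2) = (∑ i, u i^2) + 2 * (∑ i, u i * v i) + (∑ i, v i^2) := by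
      simp_rw [add_sq]; rw [Finset.sum_add_distrib, Finset.sum_add_distrib, Finset.mul_sum]
      congr 1; congr 1; apply Finset.sum_congr rfl; intro i _; ring
    rw [this]; nlinarith [hc]
  calc Real.sqrt (∑ i, (u i + v i)^2) ≤
      Real.sqrt ((Real.sqrt (∑ i, u i^2) + Real.sqrt (∑ i, v i^2))^2) := Real.sqrt_le_sqrt h1
    _ = _ := Real.sqrt_sq (by positivity)

private lemma ipg_rho_lt_mu (p q β : ℝ) (h0 : 0 < q) (hpq : q < p) (hβ : 0 < β) :
    (p/(p+β) - q/(q+β))/(p/(p+β) + q/(q+β)) < (p-q)/(p+q) := by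
  have hp : 0 < p := h0.trans hpq
  have h1 : 0 < p + β := by linarith
  have h2 : 0 < q + β := by linarith
  have h3 : 0 < p + q := by linarith
  have hab : 0 < p/(p+β) + q/(q+β) := by positivity
  have hkey : (p/(p+β))*q < p*(q/(q+β)) := by
    have e1 : p/(p+β)*q = p*q/(p+β) := by ring
    have e2 : p*(q/(q+β)) = p*q/(q+β) := by ring
    rw [e1, e2, div_lt_div_iff₀ h1 h2]
    nlinarith [mul_pos hp h0]
  rw [div_lt_div_iff₀ hab h3]
  nlinarith [hkey]

private lemma ipg_abs_bound (a b c : ℝ) (hb : 0 < b) (hba : b ≤ c) (hca : c ≤ a) :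
    |1 - 2/(a+b) * c| ≤ (a-b)/(a+b) := by
  have hab : 0 < a + b := by linarith
  have hd : 2/(a+b) * (a+b) = 2 := div_mul_cancel₀ 2 (ne_of_gt hab)
  have hr : (a-b)/(a+b) * (a+b) = a - b := div_mul_cancel₀ _ (ne_of_gt hab)
  rw [abs_le]
  constructor <;> nlinarith [hd, hr, hab]


set_option maxHeartbeats 2000000 in
/-- Theorem 2 of the paper: the IPG method with the optimal step-size
`δ = 2/(λ₁/(λ₁+β) + λ_r/(λ_r+β))` eventually contracts exponentially faster than
gradient descent: `‖g(t+1)‖ ≤ c (r μ_GD)^{t+1} ‖g(0)‖` for all `t > τ`, with `r < 1`. -/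
theorem ipg_beats_gradient_descent
    (n d : ℕ) (hd : 0 < d)
    (A : Matrix (Fin n) (Fin d) ℝ) (B : Fin n → ℝ)
    (hAnz : Aᵀ * A ≠ 0)
    (lam : Fin d → ℝ) (V : Matrix (Fin d) (Fin d) ℝ)
    (hV : Vᵀ * V = 1)
    (hdiag : Aᵀ * A = V * Matrix.diagonal lam * Vᵀ)
    (hanti : Antitone lam)
    (r : ℕ) (hr1 : 1 ≤ r) (hrd : r ≤ d)
    (hlamr : 0 < lam ⟨r - 1, by omega⟩)
    (hzero : ∀ j : Fin d, r ≤ (j : ℕ) → lam j = 0)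
    (hgap : lam ⟨r - 1, by omega⟩ < lam ⟨0, hd⟩)
    (α β δ : ℝ) (hβ : 0 < β)
    (hα0 : 0 < α) (hα : α < 2 / (lam ⟨0, hd⟩ + β))
    (hδ : δ = 2 / (lam ⟨0, hd⟩ / (lam ⟨0, hd⟩ + β) +
        lam ⟨r - 1, by omega⟩ / (lam ⟨r - 1, by omega⟩ + β)))
    (K : ℕ → Matrix (Fin d) (Fin d) ℝ)
    (hK : ∀ t, K (t + 1) = K t - α • ((Aᵀ * A + β • 1) * K t - 1))
    (x : ℕ → Fin d → ℝ) (g : ℕ → Fin d → ℝ)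
    (hg : ∀ t, g t = Aᵀ.mulVec (A.mulVec (x t) - B))
    (hx : ∀ t, x (t + 1) = x t - δ • (K (t + 1)).mulVec (g t)) :
    ∃ (τ : ℕ) (c rr : ℝ), 0 < τ ∧ 0 < c ∧ 0 < rr ∧ rr < 1 ∧
      ∀ t : ℕ, τ < t →
        enormVec (g (t + 1)) ≤
          c * (rr * ((lam ⟨0, hd⟩ - lam ⟨r - 1, by omega⟩) /
              (lam ⟨0, hd⟩ + lam ⟨r - 1, by omega⟩))) ^ (t + 1) * enormVec (g 0) := by
  have hVVt : V * Vᵀ = 1 := mul_eq_one_comm.mp hV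
  set i0 : Fin d := ⟨0, hd⟩ with hi0
  set ir : Fin d := ⟨r - 1, by omega⟩ with hir
  have hlam_nonneg : ∀ i, 0 ≤ lam i := by
    intro i
    rcases lt_or_ge (i : ℕ) r with h | h
    · have : lam ir ≤ lam i := hanti (by simp [hir, Fin.le_def]; omega)
      linarith
    · rw [hzero i h]
  have hlam_le : ∀ i, lam i ≤ lam i0 := fun i => hanti (by simp [hi0, Fin.le_def])
  have hlb : ∀ i, lam i + β ≠ 0 := fun i => by have := hlam_nonneg i; positivity
  -- spectral form of A^T A + βI
  have hS : Aᵀ * A + β • (1 : Matrix (Fin d) (Fin d) ℝ)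
      = V * Matrix.diagonal (fun i => lam i + β) * Vᵀ := by
    have h1 : β • (1 : Matrix (Fin d) (Fin d) ℝ) = V * (β • (1:Matrix (Fin d) (Fin d) ℝ)) * Vᵀ := by
      rw [Matrix.mul_smul, Matrix.smul_mul, mul_one, hVVt]
    rw [hdiag, h1, Matrix.smul_one_eq_diagonal]
    rw [← Matrix.add_mul, ← Matrix.mul_add, ← Matrix.diagonal_add]
  set Kb : Matrix (Fin d) (Fin d) ℝ := V * Matrix.diagonal (fun i => (lam i + β)⁻¹) * Vᵀ with hKb
  have hSKb : (Aᵀ * A + β • 1) * Kb = 1 := by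
    rw [hS, hKb]
    calc V * Matrix.diagonal (fun i => lam i + β) * Vᵀ *
          (V * Matrix.diagonal (fun i => (lam i + β)⁻¹) * Vᵀ)
        = V * Matrix.diagonal (fun i => lam i + β) * (Vᵀ * V) *
          Matrix.diagonal (fun i => (lam i + β)⁻¹) * Vᵀ := by
          simp only [Matrix.mul_assoc]
      _ = V * (Matrix.diagonal (fun i => lam i + β) *
          Matrix.diagonal (fun i => (lam i + β)⁻¹)) * Vᵀ := by
          rw [hV, mul_one]; simp only [Matrix.mul_assoc]
      _ = 1 := by
          rw [Matrix.diagonal_mul_diagonal]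
          have : (fun i => (lam i + β) * (lam i + β)⁻¹) = fun _ => (1:ℝ) := by
            funext i; exact mul_inv_cancel₀ (hlb i)
          rw [this, Matrix.diagonal_one, mul_one, hVVt]
  have hKrec : ∀ t, K (t+1) - Kb = (1 - α • (Aᵀ * A + β • 1)) * (K t - Kb) := by
    intro t
    rw [hK t, Matrix.sub_mul, Matrix.one_mul, Matrix.smul_mul, Matrix.mul_sub, hSKb, smul_sub]
    module
  set W : ℕ → Matrix (Fin d) (Fin d) ℝ := fun t => Vᵀ * (K t - Kb) * V with hWdef
  have hVtS : Vᵀ * (1 - α • (Aᵀ * A + β • 1))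
      = Matrix.diagonal (fun i => 1 - α * (lam i + β)) * Vᵀ := by
    rw [hS, Matrix.mul_sub, mul_one, Matrix.mul_smul]
    have : Vᵀ * (V * Matrix.diagonal (fun i => lam i + β) * Vᵀ)
        = Matrix.diagonal (fun i => lam i + β) * Vᵀ := by
      rw [← Matrix.mul_assoc, ← Matrix.mul_assoc, hV, Matrix.one_mul]
    rw [this]
    have h1 : (Matrix.diagonal (fun i => 1 - α * (lam i + β)))
        = 1 - α • Matrix.diagonal (fun i => lam i + β) := by
      ext i j
      by_cases h : i = j <;>
        simp [Matrix.sub_apply, Matrix.smul_apply, Matrix.one_apply, Matrix.diagonal_apply, h]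
    rw [h1, Matrix.sub_mul, Matrix.one_mul, Matrix.smul_mul]
  have hW : ∀ t, W (t+1) = Matrix.diagonal (fun i => 1 - α * (lam i + β)) * W t := by
    intro t
    show Vᵀ * (K (t+1) - Kb) * V = _
    rw [hKrec t, ← Matrix.mul_assoc, hVtS, hWdef]
    simp only [Matrix.mul_assoc]
  have hWpow : ∀ t i j, W t i j = (1 - α * (lam i + β))^t * W 0 i j := by
    intro t
    induction t with
    | zero => intro i j; simp
    | succ t ih =>
      intro i j
      rw [hW t, Matrix.diagonal_mul, ih i j, pow_succ]
      ring
  -- the gradient recursion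
  have hgrec : ∀ t, g (t+1) = g t - δ • (Aᵀ * A * K (t+1)).mulVec (g t) := by
    intro t
    rw [hg (t+1), hx t, Matrix.mulVec_sub A, Matrix.mulVec_smul, sub_right_comm,
      Matrix.mulVec_sub Aᵀ, Matrix.mulVec_smul, ← hg t, Matrix.mulVec_mulVec,
      Matrix.mulVec_mulVec, Matrix.mul_assoc]
  -- coordinates in the eigenbasis
  set y : ℕ → Fin d → ℝ := fun t => Vᵀ.mulVec (g t) with hy
  have hgy : ∀ t, g t = V.mulVec (y t) := by
    intro t
    rw [hy]
    simp only [Matrix.mulVec_mulVec, hVVt, Matrix.one_mulVec]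
  -- zero coordinates above the rank
  have hAV : ∀ (k : Fin n) (j : Fin d), r ≤ (j:ℕ) → (A * V) k j = 0 := by
    intro k j hj
    have hsum : ∑ k : Fin n, (A * V) k j ^ 2 = 0 := by
      have h1 : ((A * V)ᵀ * (A * V)) j j = lam j := by
        have : (A * V)ᵀ * (A * V) = Matrix.diagonal lam := by
          rw [Matrix.transpose_mul, Matrix.mul_assoc, ← Matrix.mul_assoc Aᵀ A V, hdiag]
          calc Vᵀ * (V * Matrix.diagonal lam * Vᵀ * V)
              = (Vᵀ * V) * Matrix.diagonal lam * (Vᵀ * V) := by simp only [Matrix.mul_assoc]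
            _ = Matrix.diagonal lam := by rw [hV, Matrix.one_mul, mul_one]
        rw [this, Matrix.diagonal_apply_eq]
      rw [← hzero j hj, ← h1]
      simp [Matrix.mul_apply, Matrix.transpose_apply, sq, mul_comm]
    have := (Finset.sum_eq_zero_iff_of_nonneg (fun k _ => sq_nonneg ((A*V) k j))).mp hsum k
      (Finset.mem_univ k)
    exact pow_eq_zero_iff (n := 2) (by norm_num) |>.mp this
  have hy0 : ∀ t (j : Fin d), r ≤ (j:ℕ) → y t j = 0 := by
    intro t j hj
    rw [hy]
    show Vᵀ.mulVec (g t) j = 0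
    rw [hg t, Matrix.mulVec_mulVec, ← Matrix.transpose_mul]
    simp only [Matrix.mulVec, dotProduct, Matrix.transpose_apply]
    exact Finset.sum_eq_zero fun k _ => by rw [hAV k j hj, zero_mul]
  -- the matrix of the y-recursion
  have hM : ∀ t, Vᵀ * (Aᵀ * A * K (t+1)) * V
      = Matrix.diagonal (fun i => lam i * (lam i + β)⁻¹) + Matrix.diagonal lam * W (t+1) := by
    intro t
    have hsplit : K (t+1) = Kb + (K (t+1) - Kb) := by abel
    have hVtA : Vᵀ * (Aᵀ * A) = Matrix.diagonal lam * Vᵀ := by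
      rw [hdiag, ← Matrix.mul_assoc, ← Matrix.mul_assoc, hV, Matrix.one_mul]
    calc Vᵀ * (Aᵀ * A * K (t+1)) * V = (Vᵀ * (Aᵀ * A)) * (K (t+1)) * V := by
          simp only [Matrix.mul_assoc]
      _ = Matrix.diagonal lam * Vᵀ * (Kb + (K (t+1) - Kb)) * V := by rw [hVtA, ← hsplit]
      _ = Matrix.diagonal lam * (Vᵀ * Kb * V) + Matrix.diagonal lam * W (t+1) := by
          rw [Matrix.mul_add, Matrix.add_mul, hWdef]
          simp only [Matrix.mul_assoc]
      _ = _ := by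
          rw [hKb]
          calc Matrix.diagonal lam * (Vᵀ * ((V * Matrix.diagonal fun i => (lam i + β)⁻¹) * Vᵀ) * V)
                + Matrix.diagonal lam * W (t+1)
              = Matrix.diagonal lam * ((Vᵀ * V) * (Matrix.diagonal fun i => (lam i + β)⁻¹)
                  * (Vᵀ * V)) + Matrix.diagonal lam * W (t+1) := by
                simp only [Matrix.mul_assoc]
            _ = _ := by
                rw [hV, Matrix.one_mul, mul_one, Matrix.diagonal_mul_diagonal]
  -- the coordinate recursion
  have hyrec : ∀ t i, y (t+1) i
      = (1 - δ * (lam i * (lam i + β)⁻¹)) * y t i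
        + -(δ * (lam i * ∑ j, W (t+1) i j * y t j)) := by
    intro t i
    have h1 : y (t+1) = y t - δ • ((Vᵀ * (Aᵀ * A * K (t+1)) * V).mulVec (y t)) := by
      rw [hy]
      show Vᵀ.mulVec (g (t+1)) = _
      rw [hgrec t, Matrix.mulVec_sub, Matrix.mulVec_smul, Matrix.mulVec_mulVec]
      congr 2
      rw [hgy t, Matrix.mulVec_mulVec, Matrix.mulVec_mulVec]
    rw [h1, hM t]
    simp only [Pi.sub_apply, Pi.smul_apply, smul_eq_mul, Matrix.add_mulVec,
      Matrix.mulVec_diagonal, ← Matrix.mulVec_mulVec, Matrix.mulVec_diagonal,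
      Pi.add_apply]
    have hWmv : (W (t+1)).mulVec (y t) i = ∑ j, W (t+1) i j * y t j := by
      simp [Matrix.mulVec, dotProduct]
    rw [hWmv]
    ring
  -- norms agree in the eigenbasis
  have hnrm : ∀ t, ∑ i, (y t i)^2 = ∑ i, (g t i)^2 := by
    intro t
    have h1 : ∀ (w : Fin d → ℝ), ∑ i, (Vᵀ.mulVec w i)^2 = ∑ i, (w i)^2 := by
      intro w
      calc ∑ i, (Vᵀ.mulVec w i)^2 = (w ᵥ* V) ⬝ᵥ (Vᵀ.mulVec w) := by
            simp [Matrix.mulVec_transpose, dotProduct, sq]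
        _ = w ⬝ᵥ (V.mulVec (Vᵀ.mulVec w)) := (Matrix.dotProduct_mulVec w V _).symm
        _ = w ⬝ᵥ w := by rw [Matrix.mulVec_mulVec, hVVt, Matrix.one_mulVec]
        _ = ∑ i, (w i)^2 := by simp [dotProduct, sq]
    exact h1 (g t)
  -- norm sequence
  set N : ℕ → ℝ := fun t => Real.sqrt (∑ i, (y t i)^2) with hN
  have henrm : ∀ t, enormVec (g t) = N t := by
    intro t
    show Real.sqrt (∑ i, g t i ^ 2) = Real.sqrt (∑ i, (y t i)^2)
    rw [hnrm t]
  have hNnn : ∀ t, 0 ≤ N t := fun t => Real.sqrt_nonneg _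
  -- scalar data
  have hl1 : 0 < lam i0 := hlamr.trans hgap
  have hirβ : 0 < lam ir + β := by linarith
  have hi0β : 0 < lam i0 + β := by linarith
  set a : ℝ := lam i0 / (lam i0 + β) with ha
  set b : ℝ := lam ir / (lam ir + β) with hb
  have hbpos : 0 < b := div_pos hlamr hirβ
  have hmono : ∀ u v : ℝ, 0 ≤ u → u ≤ v → u/(u+β) ≤ v/(v+β) := by
    intro u v hu huv
    rw [div_le_div_iff₀ (by linarith) (by linarith)]
    nlinarith
  have hba : b < a := by
    rw [hb, ha, div_lt_div_iff₀ hirβ hi0β]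
    nlinarith [hlamr, hgap]
  have habpos : 0 < a + b := by linarith
  set ρ : ℝ := (a - b)/(a + b) with hρ
  set μ : ℝ := (lam i0 - lam ir)/(lam i0 + lam ir) with hμ
  have hρpos : 0 < ρ := div_pos (by linarith) habpos
  have hμpos : 0 < μ := div_pos (by linarith) (by linarith)
  have hρμ : ρ < μ := ipg_rho_lt_mu (lam i0) (lam ir) β hlamr hgap hβ
  have hδeq : δ = 2/(a+b) := hδ
  have hδpos : 0 < δ := by rw [hδeq]; positivity
  -- coordinatewise spectral bound
  have hcoord : ∀ i : Fin d, (i:ℕ) < r → |1 - δ * (lam i * (lam i + β)⁻¹)| ≤ ρ := by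
    intro i hi
    have hlo : b ≤ lam i / (lam i + β) := by
      rw [hb]
      exact hmono (lam ir) (lam i) hlamr.le (hanti (by simp [hir, Fin.le_def]; omega))
    have hhi : lam i / (lam i + β) ≤ a := by
      rw [ha]
      exact hmono (lam i) (lam i0) (hlam_nonneg i) (hlam_le i)
    have := ipg_abs_bound a b (lam i / (lam i + β)) hbpos hlo hhi
    rw [hρ, hδeq]
    rw [div_eq_mul_inv (lam i)] at this
    exact this
  -- the auxiliary contraction rate for K
  set ρ₂ : ℝ := max |1 - α*β| |1 - α*(lam i0 + β)| with hρ₂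
  have hρ₂0 : 0 ≤ ρ₂ := le_trans (abs_nonneg _) (le_max_left _ _)
  have hαl1 : α * (lam i0 + β) < 2 := by
    have := (lt_div_iff₀ hi0β).mp hα
    linarith
  have hρ₂1 : ρ₂ < 1 := by
    rw [hρ₂]
    apply max_lt
    · rw [abs_lt]; constructor <;> nlinarith [mul_pos hα0 hβ]
    · rw [abs_lt]; constructor <;> nlinarith [mul_pos hα0 hi0β]
  have hcoord2 : ∀ i : Fin d, |1 - α*(lam i + β)| ≤ ρ₂ := by
    intro i
    rw [abs_le]
    constructor
    · have h2 := neg_abs_le (1 - α*(lam i0 + β))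
      have h3 : |1 - α*(lam i0+β)| ≤ ρ₂ := le_max_right _ _
      nlinarith [mul_le_mul_of_nonneg_left (hlam_le i) hα0.le]
    · have h2 := le_abs_self (1 - α*β)
      have h3 : |1 - α*β| ≤ ρ₂ := le_max_left _ _
      nlinarith [mul_nonneg hα0.le (hlam_nonneg i)]
  -- Frobenius data of the initial pre-conditioner error
  set F : ℝ := ∑ i, ∑ j, (W 0 i j)^2 with hF
  have hF0 : 0 ≤ F := by positivity
  set E : ℝ := δ * lam i0 * Real.sqrt F with hE
  have hE0 : 0 ≤ E := by positivity
  -- one-step contraction estimate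
  have key : ∀ t, N (t+1) ≤ (ρ + E * ρ₂^(t+1)) * N t := by
    intro t
    set u : Fin d → ℝ := fun i => (1 - δ * (lam i * (lam i + β)⁻¹)) * y t i with hu
    set v : Fin d → ℝ := fun i => -(δ * (lam i * ∑ j, W (t+1) i j * y t j)) with hv
    have h1 : N (t+1) = Real.sqrt (∑ i, (u i + v i)^2) := by
      show Real.sqrt (∑ i, (y (t+1) i)^2) = Real.sqrt (∑ i, (u i + v i)^2)
      rw [Finset.sum_congr rfl (fun i _ => by rw [hyrec t i] : ∀ i ∈ univ,
        (y (t+1) i)^2 = (u i + v i)^2)]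
    have hub : Real.sqrt (∑ i, u i^2) ≤ ρ * N t := by
      have hsum : ∑ i, u i^2 ≤ ρ^2 * ∑ i, (y t i)^2 := by
        rw [Finset.mul_sum]
        apply Finset.sum_le_sum
        intro i _
        rcases lt_or_ge (i:ℕ) r with h | h
        · have hc := hcoord i h
          have hc2 : (1 - δ * (lam i * (lam i + β)⁻¹))^2 ≤ ρ^2 := by
            rw [← sq_abs]
            exact pow_le_pow_left₀ (abs_nonneg _) hc 2
          show ((1 - δ * (lam i * (lam i + β)⁻¹)) * y t i)^2 ≤ ρ^2 * (y t i)^2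
          calc ((1 - δ * (lam i * (lam i + β)⁻¹)) * y t i)^2
              = (1 - δ * (lam i * (lam i + β)⁻¹))^2 * (y t i)^2 := by ring
            _ ≤ ρ^2 * (y t i)^2 := mul_le_mul_of_nonneg_right hc2 (sq_nonneg _)
        · have h0 : y t i = 0 := hy0 t i h
          show ((1 - δ * (lam i * (lam i + β)⁻¹)) * y t i)^2 ≤ ρ^2 * (y t i)^2
          rw [h0]
          simp
      calc Real.sqrt (∑ i, u i^2) ≤ Real.sqrt (ρ^2 * ∑ i, (y t i)^2) :=
            Real.sqrt_le_sqrt hsum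
        _ = ρ * N t := by
            rw [Real.sqrt_mul (sq_nonneg ρ), Real.sqrt_sq hρpos.le]
    have hvb : Real.sqrt (∑ i, v i^2) ≤ E * ρ₂^(t+1) * N t := by
      have hsum : ∑ i, v i^2 ≤ (E * ρ₂^(t+1))^2 * ∑ i, (y t i)^2 := by
        have hterm : ∀ i : Fin d,
            v i^2 ≤ δ^2 * (lam i0)^2 * (ρ₂^(t+1))^2 * (∑ j, (W 0 i j)^2)
              * (∑ j, (y t j)^2) := by
          intro i
          have hCS : (∑ j, W (t+1) i j * y t j)^2
              ≤ (∑ j, (W (t+1) i j)^2) * (∑ j, (y t j)^2) :=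
            Finset.sum_mul_sq_le_sq_mul_sq univ _ _
          have hWF : (∑ j, (W (t+1) i j)^2)
              = ((1 - α*(lam i + β))^(t+1))^2 * (∑ j, (W 0 i j)^2) := by
            rw [Finset.mul_sum]
            apply Finset.sum_congr rfl
            intro j _
            rw [hWpow (t+1) i j]
            ring
          have hpowb : ((1 - α*(lam i + β))^(t+1))^2 ≤ (ρ₂^(t+1))^2 := by
            have h1 : |1 - α*(lam i + β)|^(t+1) ≤ ρ₂^(t+1) :=
              pow_le_pow_left₀ (abs_nonneg _) (hcoord2 i) (t+1)
            calc ((1 - α*(lam i + β))^(t+1))^2 = (|1 - α*(lam i + β)|^(t+1))^2 := by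
                  rw [← abs_pow, sq_abs]
              _ ≤ (ρ₂^(t+1))^2 := pow_le_pow_left₀ (by positivity) h1 2
          have hlam2 : (lam i)^2 ≤ (lam i0)^2 :=
            pow_le_pow_left₀ (hlam_nonneg i) (hlam_le i) 2
          have hWsub0 : 0 ≤ ∑ j, (W 0 i j)^2 := by positivity
          have hysub0 : 0 ≤ ∑ j, (y t j)^2 := by positivity
          have hv2 : v i ^2 = δ^2 * (lam i)^2 * (∑ j, W (t+1) i j * y t j)^2 := by
            show (-(δ * (lam i * ∑ j, W (t+1) i j * y t j)))^2 = _
            ring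
          rw [hv2]
          calc δ^2 * (lam i)^2 * (∑ j, W (t+1) i j * y t j)^2
              ≤ δ^2 * (lam i)^2 * ((∑ j, (W (t+1) i j)^2) * (∑ j, (y t j)^2)) := by
                apply mul_le_mul_of_nonneg_left hCS (by positivity)
            _ = δ^2 * (lam i)^2 * (((1 - α*(lam i + β))^(t+1))^2
                  * (∑ j, (W 0 i j)^2) * (∑ j, (y t j)^2)) := by rw [hWF]
            _ ≤ δ^2 * (lam i)^2 * ((ρ₂^(t+1))^2
                  * (∑ j, (W 0 i j)^2) * (∑ j, (y t j)^2)) := by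
                apply mul_le_mul_of_nonneg_left _ (by positivity)
                apply mul_le_mul_of_nonneg_right _ hysub0
                exact mul_le_mul_of_nonneg_right hpowb hWsub0
            _ ≤ δ^2 * (lam i0)^2 * ((ρ₂^(t+1))^2
                  * (∑ j, (W 0 i j)^2) * (∑ j, (y t j)^2)) := by
                apply mul_le_mul_of_nonneg_right _ (by positivity)
                exact mul_le_mul_of_nonneg_left hlam2 (by positivity)
            _ = δ^2 * (lam i0)^2 * (ρ₂^(t+1))^2 * (∑ j, (W 0 i j)^2)
                  * (∑ j, (y t j)^2) := by ring
        calc ∑ i, v i^2 ≤ ∑ i, (δ^2 * (lam i0)^2 * (ρ₂^(t+1))^2 * (∑ j, (W 0 i j)^2)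
              * (∑ j, (y t j)^2)) := Finset.sum_le_sum (fun i _ => hterm i)
          _ = δ^2 * (lam i0)^2 * (ρ₂^(t+1))^2 * F * (∑ j, (y t j)^2) := by
              have e : ∀ i : Fin d, δ^2 * (lam i0)^2 * (ρ₂^(t+1))^2 * (∑ j, (W 0 i j)^2)
                  * (∑ j, (y t j)^2)
                  = (δ^2 * (lam i0)^2 * (ρ₂^(t+1))^2 * (∑ j, (y t j)^2))
                    * (∑ j, (W 0 i j)^2) := fun i => by ring
              rw [Finset.sum_congr rfl (fun i _ => e i), ← Finset.mul_sum, ← hF]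
              ring
          _ = (E * ρ₂^(t+1))^2 * ∑ j, (y t j)^2 := by
              have hFs : Real.sqrt F ^ 2 = F := Real.sq_sqrt hF0
              rw [hE]
              linear_combination (-(δ^2 * (lam i0)^2 * (ρ₂^(t+1))^2
                * (∑ j, (y t j)^2))) * hFs
      calc Real.sqrt (∑ i, v i^2) ≤ Real.sqrt ((E * ρ₂^(t+1))^2 * ∑ i, (y t i)^2) :=
            Real.sqrt_le_sqrt hsum
        _ = E * ρ₂^(t+1) * N t := by
            rw [Real.sqrt_mul (sq_nonneg _), Real.sqrt_sq (by positivity)]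
    calc N (t+1) = Real.sqrt (∑ i, (u i + v i)^2) := h1
      _ ≤ Real.sqrt (∑ i, u i^2) + Real.sqrt (∑ i, v i^2) := ipg_l2_triangle u v
      _ ≤ ρ * N t + E * ρ₂^(t+1) * N t := add_le_add hub hvb
      _ = (ρ + E * ρ₂^(t+1)) * N t := by ring
  -- crude Lipschitz bound
  have hL : ∀ t, N (t+1) ≤ (ρ + E) * N t := by
    intro t
    refine (key t).trans (mul_le_mul_of_nonneg_right ?_ (hNnn t))
    have h1 : ρ₂^(t+1) ≤ 1 := pow_le_one₀ hρ₂0 hρ₂1.le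
    nlinarith [hE0]
  have hLpos : 0 < ρ + E := by linarith
  -- choose the threshold
  obtain ⟨Nk, hNk⟩ := exists_pow_lt_of_lt_one
    (x := (μ - ρ)/2/(E+1)) (div_pos (div_pos (by linarith [hρμ]) two_pos) (by linarith [hE0])) hρ₂1
  set s : ℝ := (ρ + μ)/2 with hs
  have hs0 : 0 < s := by rw [hs]; linarith
  have hsμ : s < μ := by rw [hs]; linarith
  have hstep : ∀ t, Nk ≤ t → N (t+1) ≤ s * N t := by
    intro t ht
    refine (key t).trans (mul_le_mul_of_nonneg_right ?_ (hNnn t))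
    have h1 : ρ₂^(t+1) ≤ ρ₂^Nk := pow_le_pow_of_le_one hρ₂0 hρ₂1.le (by omega)
    have h2 : E * ρ₂^(t+1) ≤ (E+1) * ρ₂^Nk := by
      nlinarith [pow_nonneg hρ₂0 Nk, pow_nonneg hρ₂0 (t+1)]
    have h3 : (E+1) * ρ₂^Nk < (μ - ρ)/2 := by
      have h4 : ρ₂^Nk * (E+1) < (μ - ρ)/2 := by
        have := (lt_div_iff₀ (by positivity : (0:ℝ) < E+1)).mp hNk
        linarith
      linarith [h4]
    rw [hs]; linarith
  have hchain : ∀ m, N (Nk + m) ≤ s^m * N Nk := by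
    intro m
    induction m with
    | zero => simp
    | succ m ih =>
      have h1 : N (Nk + m + 1) ≤ s * N (Nk + m) := hstep (Nk + m) (by omega)
      calc N (Nk + (m+1)) = N (Nk + m + 1) := by ring_nf
        _ ≤ s * N (Nk + m) := h1
        _ ≤ s * (s^m * N Nk) := mul_le_mul_of_nonneg_left ih hs0.le
        _ = s^(m+1) * N Nk := by ring
  have hcrude : ∀ m, N m ≤ (ρ + E)^m * N 0 := by
    intro m
    induction m with
    | zero => simp
    | succ m ih =>
      calc N (m+1) ≤ (ρ + E) * N m := hL m
        _ ≤ (ρ + E) * ((ρ + E)^m * N 0) := mul_le_mul_of_nonneg_left ih hLpos.le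
        _ = (ρ + E)^(m+1) * N 0 := by ring
  -- assemble the answer
  refine ⟨Nk + 1, (ρ + E)^Nk / s^Nk, s / μ, by omega, by positivity, by positivity,
    (div_lt_one hμpos).mpr hsμ, ?_⟩
  intro t ht
  show enormVec (g (t+1)) ≤ (ρ + E)^Nk / s^Nk * (s/μ * μ)^(t+1) * enormVec (g 0)
  have hsμμ : s/μ * μ = s := div_mul_cancel₀ s (ne_of_gt hμpos)
  rw [hsμμ, henrm (t+1), henrm 0]
  have hm : Nk + (t + 1 - Nk) = t + 1 := by omega
  have h1 : N (t+1) ≤ s^(t+1-Nk) * N Nk := by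
    have := hchain (t+1-Nk)
    rwa [hm] at this
  have h2 : N Nk ≤ (ρ + E)^Nk * N 0 := hcrude Nk
  have h3 : N (t+1) ≤ s^(t+1-Nk) * ((ρ + E)^Nk * N 0) :=
    h1.trans (mul_le_mul_of_nonneg_left h2 (by positivity))
  have h4 : (ρ + E)^Nk / s^Nk * s^(t+1) * N 0 = s^(t+1-Nk) * ((ρ + E)^Nk * N 0) := by
    rw [← hm, pow_add]
    field_simp
    rw [Nat.add_sub_cancel_left]
    ring
  rw [h4]
  exact h3
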